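/- Let W ⊆ ℝ be nonempty, let L : W → ℝ and ℓ : W → ℝ with ℓ being G-Lipschitz (G > 0). Fix σ ∈ ℝ and set σ' = σ + 2G. If w_{t+1}' minimizes w ↦ L(w) + ℓ(w) − σ' w over W and w_t minimizes w ↦ L(w) − σ w over W, then w_{t+1}' ≥ w_t. -/
import Mathlib

theorem stmt_2 (W : Set ℝ) (hW : W.Nonempty) (L ℓ : ℝ → ℝ) (G : ℝ) (hG : 0 < G)
    (hLip : ∀ x ∈ W, ∀ y ∈ W, |ℓ x - ℓ y| ≤ G * |x - y|)
    (σ : ℝ) (wt1' wt : ℝ)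
    (hwt1' : wt1' ∈ W ∧ ∀ w ∈ W, L wt1' + ℓ wt1' - (σ + 2 * G) * wt1' ≤ L w + ℓ w - (σ + 2 * G) * w)
    (hwt : wt ∈ W ∧ ∀ w ∈ W, L wt - σ * wt ≤ L w - σ * w) :
    wt1' ≥ wt := by
  by_contra h
  push_neg at h
  have h1 := hwt1'.2 wt hwt.1
  have h2 := hwt.2 wt1' hwt1'.1
  have hlip := hLip wt1' hwt1'.1 wt hwt.1
  rw [abs_sub_comm wt1' wt, abs_of_pos (by linarith : (0:ℝ) < wt - wt1')] at hlip
  have := abs_le.mp hlip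
  nlinarith [this.1, this.2]
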